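/- Let F : R^n → R^m be continuously differentiable with F(p)=0, and suppose the Jacobian DF(p) has rank r < n. Assume there is an r×r invertible submatrix of DF(p) using rows E* and columns p*. Then there exists a nonconstant continuously differentiable path p(t) with p(0)=p through solutions of the equations indexed by E*, giving a finite flex; in particular, the solution set of the subsystem {F_i = 0 : i ∈ E*} near p is a manifold of dimension n − r > 0. -/

import Mathlib

open Metric Set


/-- If `F : ℝ^n → ℝ^m` is `C¹` with `F(p) = 0` and its Jacobian at `p` has rank
`r < n`, with an invertible `r×r` submatrix on rows `E*` and columns `S`, then there
is a nonconstant `C¹` path through solutions of the subsystem indexed by `E*`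
(a finite flex), and near `p` the solution set of that subsystem is parametrized by a
`C¹` map from an `(n−r)`-dimensional neighborhood (a manifold of dimension `n−r > 0`). -/

theorem stmt9 (n m r : ℕ) (hr : r < n)
    (F : (Fin n → ℝ) → (Fin m → ℝ)) (hF : ContDiff ℝ 1 F)
    (p : Fin n → ℝ) (hp : F p = 0)
    (J : Matrix (Fin m) (Fin n) ℝ)
    (hJ : J = Matrix.of fun i j => fderiv ℝ F p (Pi.single j 1) i)
    (hrank : J.rank = r)
    (Estar : Finset (Fin m)) (S : Finset (Fin n))
    (hE : Estar.card = r) (hS : S.card = r)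
    (hsub : (J.submatrix (Subtype.val : {i // i ∈ Estar} → Fin m)
        (Subtype.val : {j // j ∈ S} → Fin n)).rank = r) :
    (∃ γ : ℝ → (Fin n → ℝ), ContDiff ℝ 1 γ ∧ γ 0 = p ∧ (∃ t, γ t ≠ p) ∧
      ∀ t : ℝ, ∀ i ∈ Estar, F (γ t) i = 0) ∧
    (∃ U ∈ nhds p, ∃ W ∈ nhds (0 : Fin (n - r) → ℝ),
      ∃ g : (Fin (n - r) → ℝ) → (Fin n → ℝ), ContDiff ℝ 1 g ∧ g 0 = p ∧
        Set.BijOn g W {q ∈ U | ∀ i ∈ Estar, F q i = 0}) := by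
  set k := n - r with hk
  have hkpos : 0 < k := Nat.sub_pos_of_lt hr
  have hScompl : Sᶜ.card = k := by
    rw [Finset.card_compl, hS]; simp [hk]
  set eE : Fin r ≃o {i // i ∈ Estar} := Estar.orderIsoOfFin hE with heE
  set eS : Fin k ≃o {j // j ∈ Sᶜ} := Sᶜ.orderIsoOfFin hScompl with heS
  set L₁ : (Fin m → ℝ) →L[ℝ] (Fin r → ℝ) :=
    ContinuousLinearMap.pi (fun a => ContinuousLinearMap.proj (R := ℝ) ((eE a : {i // i ∈ Estar}) : Fin m)) with hL₁
  set L₂ : (Fin n → ℝ) →L[ℝ] (Fin k → ℝ) :=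
    ContinuousLinearMap.pi (fun a => ContinuousLinearMap.proj (R := ℝ) ((eS a : {j // j ∈ Sᶜ}) : Fin n)) with hL₂
  set Φ : (Fin n → ℝ) → (Fin r → ℝ) × (Fin k → ℝ) :=
    fun q => (L₁ (F q), L₂ q - L₂ p) with hΦdef
  have hΦ : ContDiff ℝ 1 Φ :=
    (L₁.contDiff.comp hF).prodMk (L₂.contDiff.sub contDiff_const)
  have hΦp : Φ p = 0 := by
    simp [hΦdef, hp]
  set F' : (Fin n → ℝ) →L[ℝ] (Fin m → ℝ) := fderiv ℝ F p with hF'def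
  have hF' : HasStrictFDerivAt F F' p := hF.hasStrictFDerivAt one_ne_zero
  set A : (Fin n → ℝ) →L[ℝ] (Fin r → ℝ) × (Fin k → ℝ) := (L₁.comp F').prod L₂ with hA
  have hAd : HasStrictFDerivAt Φ A p := by
    exact (L₁.hasStrictFDerivAt.comp p hF').prodMk (L₂.hasStrictFDerivAt.sub_const (L₂ p))
  -- the derivative of F in coordinates
  have hF'apply : ∀ v : Fin n → ℝ, ∀ i : Fin m, F' v i = ∑ j, v j * J i j := by
    intro v i
    have hv : v = ∑ j, v j • (Pi.single j 1 : Fin n → ℝ) := by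
      ext j'
      simp [Finset.sum_apply, Pi.single_apply]
    conv_lhs => rw [hv]
    rw [map_sum]
    rw [Finset.sum_apply]
    congr 1
    ext j
    simp [hJ, hF'def]
  -- injectivity of A
  have hinj : Function.Injective A := by
    have hker : ∀ v, A v = 0 → v = 0 := by
      intro v hv
      have h1 : L₁ (F' v) = 0 := congrArg Prod.fst hv
      have h2 : L₂ v = 0 := congrArg Prod.snd hv
      have hvS : ∀ j ∉ S, v j = 0 := by
        intro j hj
        have : (eS (eS.symm ⟨j, Finset.mem_compl.2 hj⟩) : {j // j ∈ Sᶜ}) = ⟨j, Finset.mem_compl.2 hj⟩ := by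
          simp
        have h2' := congrFun h2 (eS.symm ⟨j, Finset.mem_compl.2 hj⟩)
        simpa [hL₂, this] using h2'
      have hEv : ∀ i ∈ Estar, F' v i = 0 := by
        intro i hi
        have : (eE (eE.symm ⟨i, hi⟩) : {i // i ∈ Estar}) = ⟨i, hi⟩ := by simp
        have h1' := congrFun h1 (eE.symm ⟨i, hi⟩)
        simpa [hL₁, this] using h1'
      -- matrix injectivity
      set M := J.submatrix (Subtype.val : {i // i ∈ Estar} → Fin m)
        (Subtype.val : {j // j ∈ S} → Fin n) with hM
      have hMinj : Function.Injective M.mulVecLin := by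
        rw [← LinearMap.ker_eq_bot]
        have hrn := LinearMap.finrank_range_add_finrank_ker M.mulVecLin
        rw [Matrix.rank] at hsub
        rw [hsub] at hrn
        have hdom : Module.finrank ℝ ({j // j ∈ S} → ℝ) = r := by
          rw [Module.finrank_fintype_fun_eq_card]
          simp [hS]
        rw [hdom] at hrn
        have : Module.finrank ℝ (LinearMap.ker M.mulVecLin) = 0 := by omega
        exact Submodule.finrank_eq_zero.1 this
      set vS : {j // j ∈ S} → ℝ := fun j => v j with hvSdef
      have hMv : M.mulVecLin vS = 0 := by
        ext i
        have hsum : ∑ j, v j * J (i : Fin m) j = 0 := by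
          rw [← hF'apply]
          exact hEv i i.2
        have hsub' : (∑ j ∈ S, v j * J (i : Fin m) j) = ∑ j, v j * J (i : Fin m) j :=
          Finset.sum_subset S.subset_univ (fun j _ hj => by rw [hvS j hj, zero_mul])
        have hcoe : (∑ j : {j // j ∈ S}, v j * J (i : Fin m) j) = ∑ j ∈ S, v j * J (i : Fin m) j :=
          Finset.sum_coe_sort S (fun j => v j * J (i : Fin m) j)
        simp only [Matrix.mulVecLin_apply, Matrix.mulVec, dotProduct, hM,
          Matrix.submatrix_apply, Pi.zero_apply]
        calc ∑ j : {j // j ∈ S}, J (i : Fin m) (j : Fin n) * vS j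
            = ∑ j : {j // j ∈ S}, v (j : Fin n) * J (i : Fin m) (j : Fin n) :=
              Finset.sum_congr rfl fun j _ => mul_comm _ _
          _ = 0 := by rw [hcoe, hsub', hsum]
      have hvS0 : vS = 0 := hMinj (by simpa using hMv)
      ext j
      by_cases hj : j ∈ S
      · exact congrFun hvS0 ⟨j, hj⟩
      · exact hvS j hj
    intro v w hvw
    have : A (v - w) = 0 := by rw [map_sub, hvw, sub_self]
    have := hker _ this
    exact sub_eq_zero.1 this
  have hdim : Module.finrank ℝ (Fin n → ℝ) = Module.finrank ℝ ((Fin r → ℝ) × (Fin k → ℝ)) := by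
    rw [Module.finrank_fin_fun, Module.finrank_prod, Module.finrank_fin_fun, Module.finrank_fin_fun]
    omega
  set eqv : (Fin n → ℝ) ≃ₗ[ℝ] (Fin r → ℝ) × (Fin k → ℝ) :=
    LinearMap.linearEquivOfInjective (A : (Fin n → ℝ) →ₗ[ℝ] (Fin r → ℝ) × (Fin k → ℝ)) hinj hdim with heqv
  set e' : (Fin n → ℝ) ≃L[ℝ] (Fin r → ℝ) × (Fin k → ℝ) := eqv.toContinuousLinearEquiv with he'
  have hcoe : (e' : (Fin n → ℝ) →L[ℝ] (Fin r → ℝ) × (Fin k → ℝ)) = A := by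
    apply ContinuousLinearMap.ext
    intro v
    show e' v = A v
    simp [he', heqv]
  have hAd' : HasFDerivAt Φ (e' : (Fin n → ℝ) →L[ℝ] (Fin r → ℝ) × (Fin k → ℝ)) p := by
    rw [hcoe]; exact hAd.hasFDerivAt
  have hΦat : ContDiffAt ℝ 1 Φ p := hΦ.contDiffAt
  set PH := hΦat.toOpenPartialHomeomorph Φ hAd' one_ne_zero with hPH
  have hPHcoe : (PH : (Fin n → ℝ) → (Fin r → ℝ) × (Fin k → ℝ)) = Φ := rfl
  have hpsource : p ∈ PH.source := hΦat.mem_toOpenPartialHomeomorph_source hAd' one_ne_zero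
  have htarget : Φ p ∈ PH.target := hΦat.image_mem_toOpenPartialHomeomorph_target hAd' one_ne_zero
  set ψ : (Fin r → ℝ) × (Fin k → ℝ) → (Fin n → ℝ) := ⇑PH.symm with hψdef
  have hψat : ContDiffAt ℝ 1 ψ (Φ p) := hΦat.to_localInverse hAd' one_ne_zero
  obtain ⟨u, hu, hψu⟩ := hψat.contDiffOn le_rfl (by simp)
  set u' : Set ((Fin r → ℝ) × (Fin k → ℝ)) := interior u ∩ PH.target with hu'
  have hu'open : IsOpen u' := isOpen_interior.inter PH.open_target
  have hΦpu' : Φ p ∈ u' := ⟨mem_interior_iff_mem_nhds.2 hu, htarget⟩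
  obtain ⟨ε, hεpos, hεsub⟩ := Metric.isOpen_iff.1 hu'open _ hΦpu'
  have hball : ball ((0 : Fin r → ℝ), (0 : Fin k → ℝ)) ε ⊆ u' := by
    rw [show ((0 : Fin r → ℝ), (0 : Fin k → ℝ)) = Φ p by rw [hΦp, Prod.mk_zero_zero]]
    exact hεsub
  -- a C¹ bijection from ℝ^k onto a small open neighborhood O of 0
  set ι : EuclideanSpace ℝ (Fin k) ≃L[ℝ] (Fin k → ℝ) := EuclideanSpace.equiv (Fin k) ℝ with hι
  have hι0 : ι 0 = 0 := map_zero _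
  have hpre : (⇑ι) ⁻¹' (ball (0 : Fin k → ℝ) ε) ∈ nhds (0 : EuclideanSpace ℝ (Fin k)) := by
    apply ι.continuous.continuousAt.preimage_mem_nhds
    rw [hι0]
    exact Metric.ball_mem_nhds _ hεpos
  obtain ⟨s, hspos, hssub⟩ := Metric.mem_nhds_iff.1 hpre
  set B := OpenPartialHomeomorph.univBall (0 : EuclideanSpace ℝ (Fin k)) s with hB
  set β : (Fin k → ℝ) → (Fin k → ℝ) := fun w => ι (B (ι.symm w)) with hβ
  have hβ0 : β 0 = 0 := by
    simp [hβ, hB, OpenPartialHomeomorph.univBall_apply_zero]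
  have hβcd : ContDiff ℝ 1 β :=
    (ι.contDiff.comp OpenPartialHomeomorph.contDiff_univBall).comp ι.symm.contDiff
  have hβinj : Function.Injective β := by
    intro w₁ w₂ h
    have h2 : B (ι.symm w₁) = B (ι.symm w₂) := ι.injective h
    have h3 : ι.symm w₁ = ι.symm w₂ := by
      apply B.injOn (by rw [OpenPartialHomeomorph.univBall_source]; trivial)
        (by rw [OpenPartialHomeomorph.univBall_source]; trivial) h2
    exact ι.symm.injective h3
  set O : Set (Fin k → ℝ) := ⇑ι '' (ball (0 : EuclideanSpace ℝ (Fin k)) s) with hO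
  have hβrange : Set.range β = O := by
    rw [hO, ← OpenPartialHomeomorph.univBall_target (0 : EuclideanSpace ℝ (Fin k)) hspos, ← hB,
      ← B.image_source_eq_target, OpenPartialHomeomorph.univBall_source]
    ext x
    constructor
    · rintro ⟨w, rfl⟩
      exact ⟨B (ι.symm w), ⟨ι.symm w, trivial, rfl⟩, rfl⟩
    · rintro ⟨y, ⟨z, _, rfl⟩, rfl⟩
      exact ⟨ι z, by simp [hβ]⟩
  have hOopen : IsOpen O := ι.toHomeomorph.isOpenMap _ isOpen_ball
  have hO0 : (0 : Fin k → ℝ) ∈ O := ⟨0, mem_ball_self hspos, hι0⟩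
  have hOsub : O ⊆ ball (0 : Fin k → ℝ) ε := by
    rintro x ⟨z, hz, rfl⟩
    exact hssub hz
  -- the product box
  set Bx : Set ((Fin r → ℝ) × (Fin k → ℝ)) := (ball (0 : Fin r → ℝ) ε) ×ˢ O with hBx
  have hBxsub : Bx ⊆ u' := by
    intro x hx
    apply hball
    rw [← ball_prod_same]
    exact ⟨hx.1, hOsub hx.2⟩
  have hBxopen : IsOpen Bx := isOpen_ball.prod hOopen
  -- the parametrization
  set g : (Fin k → ℝ) → (Fin n → ℝ) := fun w => ψ ((0 : Fin r → ℝ), β w) with hg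
  have hmem : ∀ w, ((0 : Fin r → ℝ), β w) ∈ Bx := by
    intro w
    exact ⟨mem_ball_self hεpos, hβrange ▸ Set.mem_range_self w⟩
  have hmemT : ∀ w, ((0 : Fin r → ℝ), β w) ∈ PH.target := fun w => (hBxsub (hmem w)).2
  have hgC : ContDiff ℝ 1 g := by
    rw [contDiff_iff_contDiffAt]
    intro w
    have h1 : ContDiffAt ℝ 1 ψ ((0 : Fin r → ℝ), β w) := by
      apply hψu.contDiffAt
      apply _root_.mem_nhds_iff.2
      exact ⟨interior u, interior_subset, isOpen_interior, (hBxsub (hmem w)).1⟩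
    exact h1.comp w ((contDiffAt_const).prodMk hβcd.contDiffAt)
  have hg0 : g 0 = p := by
    have : ((0 : Fin r → ℝ), β 0) = Φ p := by rw [hβ0, hΦp]; rfl
    rw [hg]
    show ψ ((0 : Fin r → ℝ), β 0) = p
    rw [this, hψdef, ← hPHcoe]
    exact PH.left_inv hpsource
  -- properties of g
  have hΦg : ∀ w, Φ (g w) = ((0 : Fin r → ℝ), β w) := by
    intro w
    rw [← hPHcoe]
    exact PH.right_inv (hmemT w)
  have hgsource : ∀ w, g w ∈ PH.source := fun w => PH.map_target (hmemT w)
  set U : Set (Fin n → ℝ) := PH.source ∩ Φ ⁻¹' Bx with hU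
  have hUnhds : U ∈ nhds p := by
    apply IsOpen.mem_nhds
    · exact PH.open_source.inter (hBxopen.preimage hΦ.continuous)
    · refine ⟨hpsource, ?_⟩
      show Φ p ∈ Bx
      rw [hΦp]
      exact ⟨mem_ball_self hεpos, hO0⟩
  -- Estar membership from first component
  have hfirst : ∀ q : Fin n → ℝ, (L₁ (F q) = 0) ↔ (∀ i ∈ Estar, F q i = 0) := by
    intro q
    constructor
    · intro h i hi
      have : (eE (eE.symm ⟨i, hi⟩) : {i // i ∈ Estar}) = ⟨i, hi⟩ := by simp
      have h' := congrFun h (eE.symm ⟨i, hi⟩)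
      simpa [hL₁, this] using h'
    · intro h
      ext a
      simpa [hL₁] using h (eE a) (eE a).2
  have hmaps : ∀ w, g w ∈ {q ∈ U | ∀ i ∈ Estar, F q i = 0} := by
    intro w
    refine ⟨⟨hgsource w, ?_⟩, ?_⟩
    · show Φ (g w) ∈ Bx
      rw [hΦg w]
      exact hmem w
    · rw [← hfirst]
      have := congrArg Prod.fst (hΦg w)
      simpa [hΦdef] using this
  have hbij : Set.BijOn g Set.univ {q ∈ U | ∀ i ∈ Estar, F q i = 0} := by
    refine ⟨fun w _ => hmaps w, ?_, ?_⟩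
    · intro w₁ _ w₂ _ hww
      have h1 : Φ (g w₁) = Φ (g w₂) := by rw [hww]
      rw [hΦg w₁, hΦg w₂] at h1
      exact hβinj (congrArg Prod.snd h1)
    · rintro q ⟨⟨hqs, hqB⟩, hqF⟩
      have hqB' : Φ q ∈ Bx := hqB
      have h1 : (Φ q).1 = 0 := by
        have : L₁ (F q) = 0 := (hfirst q).2 hqF
        simpa [hΦdef] using this
      have h2 : (Φ q).2 ∈ O := hqB'.2
      rw [← hβrange] at h2
      obtain ⟨w, hw⟩ := h2
      refine ⟨w, trivial, ?_⟩
      have : ((0 : Fin r → ℝ), β w) = Φ q := by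
        rw [hw, ← h1]
      rw [hg]
      show ψ ((0 : Fin r → ℝ), β w) = q
      rw [this, hψdef, ← hPHcoe]
      exact PH.left_inv hqs
  constructor
  · -- the path
    set γ : ℝ → (Fin n → ℝ) := fun t => g (fun _ => t) with hγ
    have hlin : ContDiff ℝ 1 (fun t : ℝ => (fun _ : Fin k => t)) :=
      contDiff_pi.2 fun _ => contDiff_id
    refine ⟨γ, hgC.comp hlin, ?_, ⟨1, ?_⟩, ?_⟩
    · show g (fun _ => (0:ℝ)) = p
      have : (fun _ : Fin k => (0:ℝ)) = (0 : Fin k → ℝ) := rfl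
      rw [this, hg0]
    · show g (fun _ => (1:ℝ)) ≠ p
      intro hcon
      rw [← hg0] at hcon
      have := hbij.injOn trivial trivial hcon
      have := congrFun this ⟨0, hkpos⟩
      norm_num at this
    · intro t i hi
      exact (hmaps (fun _ => t)).2 i hi
  · exact ⟨U, hUnhds, Set.univ, Filter.univ_mem, g, hgC, hg0, hbij⟩
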